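/- The generating function F_{{132,321}}(x,q,z) equals F_{{213,321}}(x,q,z), and it satisfies the identity (1−z)(1−xz)(1−qz)·F_{{132,321}}(x,q,z) = 1 − (1+q)z + 2qz² as formal power series in x, q, z over the integers. -/

import Mathlib

open MvPowerSeries

/-- `π` contains the pattern `σ`: there is a strictly increasing choice of indices
on which the values of `π` are in the same relative order as the values of `σ`. -/
def PermContains {n m : ℕ} (π : Equiv.Perm (Fin n)) (σ : Equiv.Perm (Fin m)) : Prop :=
  ∃ f : Fin m → Fin n, (∀ i j : Fin m, i < j → f i < f j) ∧
    ∀ i j : Fin m, σ i < σ j ↔ π (f i) < π (f j)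

/-- `π` avoids the pattern `σ`. -/
def PermAvoids {n m : ℕ} (π : Equiv.Perm (Fin n)) (σ : Equiv.Perm (Fin m)) : Prop :=
  ¬ PermContains π σ

/-- Number of fixed points of `π`. -/
noncomputable def fpCount {n : ℕ} (π : Equiv.Perm (Fin n)) : ℕ :=
  Nat.card {i : Fin n // π i = i}

/-- Number of excedances of `π`. -/
noncomputable def excCount {n : ℕ} (π : Equiv.Perm (Fin n)) : ℕ :=
  Nat.card {i : Fin n // i < π i}

/-- The pattern 123. -/
def p123 : Equiv.Perm (Fin 3) := 1
/-- The pattern 132. -/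
def p132 : Equiv.Perm (Fin 3) := Equiv.swap 1 2
/-- The pattern 213. -/
def p213 : Equiv.Perm (Fin 3) := Equiv.swap 0 1
/-- The pattern 321. -/
def p321 : Equiv.Perm (Fin 3) := Equiv.swap 0 2
/-- The pattern 231 (0 ↦ 1, 1 ↦ 2, 2 ↦ 0). -/
def p231 : Equiv.Perm (Fin 3) := Equiv.swap 0 1 * Equiv.swap 1 2
/-- The pattern 312 (0 ↦ 2, 1 ↦ 0, 2 ↦ 1). -/
def p312 : Equiv.Perm (Fin 3) := Equiv.swap 1 2 * Equiv.swap 0 1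

/-- The generating function `F_Σ(x,q,z) = Σ_{n≥0} Σ_{π ∈ S_n(Σ)} x^{fp π} q^{exc π} z^n`
as a multivariate formal power series over ℤ in variables `X 0 = x`, `X 1 = q`, `X 2 = z`:
the coefficient of `x^i q^j z^n` is the number of permutations of length `n` avoiding all
patterns of `Σ` with exactly `i` fixed points and `j` excedances. -/
noncomputable def patternGF (pats : Set (Equiv.Perm (Fin 3))) : MvPowerSeries (Fin 3) ℤ :=
  fun d => (Nat.card {π : Equiv.Perm (Fin (d 2)) //
    (∀ σ ∈ pats, PermAvoids π σ) ∧ fpCount π = d 0 ∧ excCount π = d 1} : ℤ)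

/-- The variable `x` (marking fixed points). -/
noncomputable def vx : MvPowerSeries (Fin 3) ℤ := X 0
/-- The variable `q` (marking excedances). -/
noncomputable def vq : MvPowerSeries (Fin 3) ℤ := X 1
/-- The variable `z` (marking the length). -/
noncomputable def vz : MvPowerSeries (Fin 3) ℤ := X 2

/-- the rotation function -/
def rfun (a b i : ℕ) : ℕ := if i < a then i + b else if i < a + b then i - a else i

lemma rfun_lt {a b n i : ℕ} (h : a + b ≤ n) (hi : i < n) : rfun a b i < n := by
  unfold rfun; split_ifs <;> omega

lemma rfun_rfun (a b i : ℕ) : rfun b a (rfun a b i) = i := by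
  unfold rfun; split_ifs <;> omega

/-- the rotation permutation: rotate the first `a+b` entries, sending position i< a to i+b. -/
def rperm (n a b : ℕ) (h : a + b ≤ n) : Equiv.Perm (Fin n) where
  toFun i := ⟨rfun a b i, rfun_lt h i.isLt⟩
  invFun i := ⟨rfun b a i, rfun_lt (by omega) i.isLt⟩
  left_inv i := by ext; exact rfun_rfun a b i
  right_inv i := by ext; exact rfun_rfun b a i

lemma rperm_apply {n a b : ℕ} (h : a + b ≤ n) (i : Fin n) :
    ((rperm n a b h i : Fin n) : ℕ) = rfun a b i := rfl

/-- Characterization of containment of 321. -/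
lemma contains_321_iff {n : ℕ} (π : Equiv.Perm (Fin n)) :
    PermContains π p321 ↔ ∃ i j k : Fin n, i < j ∧ j < k ∧ π k < π j ∧ π j < π i := by
  constructor
  · rintro ⟨f, hmono, hiff⟩
    refine ⟨f 0, f 1, f 2, hmono 0 1 (by decide), hmono 1 2 (by decide), ?_, ?_⟩
    · exact (hiff 2 1).mp (by decide)
    · exact (hiff 1 0).mp (by decide)
  · rintro ⟨i, j, k, hij, hjk, h1, h2⟩
    refine ⟨![i, j, k], ?_, ?_⟩
    · intro s t hst
      fin_cases s <;> fin_cases t <;> simp_all <;> omega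
    · intro s t
      fin_cases s <;> fin_cases t <;>
        simp [p321, Equiv.swap_apply_of_ne_of_ne] <;> omega

lemma contains_132_iff {n : ℕ} (π : Equiv.Perm (Fin n)) :
    PermContains π p132 ↔ ∃ i j k : Fin n, i < j ∧ j < k ∧ π i < π k ∧ π k < π j := by
  constructor
  · rintro ⟨f, hmono, hiff⟩
    refine ⟨f 0, f 1, f 2, hmono 0 1 (by decide), hmono 1 2 (by decide), ?_, ?_⟩
    · exact (hiff 0 2).mp (by decide)
    · exact (hiff 2 1).mp (by decide)
  · rintro ⟨i, j, k, hij, hjk, h1, h2⟩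
    refine ⟨![i, j, k], ?_, ?_⟩
    · intro s t hst
      fin_cases s <;> fin_cases t <;> simp_all <;> omega
    · intro s t
      fin_cases s <;> fin_cases t <;>
        simp [p132, Equiv.swap_apply_of_ne_of_ne] <;> omega

lemma contains_213_iff {n : ℕ} (π : Equiv.Perm (Fin n)) :
    PermContains π p213 ↔ ∃ i j k : Fin n, i < j ∧ j < k ∧ π j < π i ∧ π i < π k := by
  constructor
  · rintro ⟨f, hmono, hiff⟩
    refine ⟨f 0, f 1, f 2, hmono 0 1 (by decide), hmono 1 2 (by decide), ?_, ?_⟩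
    · exact (hiff 1 0).mp (by decide)
    · exact (hiff 0 2).mp (by decide)
  · rintro ⟨i, j, k, hij, hjk, h1, h2⟩
    refine ⟨![i, j, k], ?_, ?_⟩
    · intro s t hst
      fin_cases s <;> fin_cases t <;> simp_all <;> omega
    · intro s t
      fin_cases s <;> fin_cases t <;>
        simp [p213, Equiv.swap_apply_of_ne_of_ne] <;> omega



theorem core (n : ℕ) (p : ℕ → ℕ)
    (hlt : ∀ i, i < n → p i < n)
    (hinj : ∀ i, i < n → ∀ j, j < n → p i = p j → i = j)
    (hsurj : ∀ v, v < n → ∃ i, i < n ∧ p i = v)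
    (h132 : ∀ i j k, i < j → j < k → k < n → ¬(p i < p k ∧ p k < p j))
    (h321 : ∀ i j k, i < j → j < k → k < n → ¬(p k < p j ∧ p j < p i)) :
    (∀ i, i < n → p i = i) ∨
    ∃ a b, 0 < a ∧ 0 < b ∧ a + b ≤ n ∧ ∀ i, i < n → p i = rfun a b i := by
  rcases Nat.eq_zero_or_pos n with rfl | hn
  · left; intro i hi; omega
  by_cases hb0 : p 0 = 0
  · -- identity case
    left
    intro i
    induction i using Nat.strong_induction_on with
    | _ i IH =>
      intro hi
      rcases Nat.eq_zero_or_pos i with rfl | hip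
      · exact hb0
      have hge : i ≤ p i := by
        by_contra hc; push_neg at hc
        have hpi := IH (p i) hc (by omega)
        have := hinj i hi (p i) (by omega) (by rw [hpi])
        omega
      rcases eq_or_lt_of_le hge with h | h
      · omega
      · exfalso
        obtain ⟨q, hq_lt, hq⟩ := hsurj i hi
        have hq_gt : i < q := by
          by_contra hc; push_neg at hc
          rcases eq_or_lt_of_le hc with h2 | h2
          · subst h2; omega
          · have := IH q h2 (by omega); omega
        exact h132 0 i q hip hq_gt hq_lt ⟨by omega, by omega⟩
  · -- rotation case
    have hbn : p 0 < n := hlt 0 hn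
    obtain ⟨a, ha_lt, ha0⟩ := hsurj 0 hn
    have ha_pos : 0 < a := by
      rcases Nat.eq_zero_or_pos a with rfl | h
      · exact absurd ha0 hb0
      · exact h
    -- Step 1 : prefix run
    have step1 : ∀ i, i < a → p i = p 0 + i := by
      intro i
      induction i using Nat.strong_induction_on with
      | _ i IH =>
        intro hia
        rcases Nat.eq_zero_or_pos i with rfl | hip
        · omega
        obtain ⟨j, rfl⟩ : ∃ j, i = j + 1 := ⟨i - 1, by omega⟩
        have hj := IH j (by omega) (by omega)
        have hin : j + 1 < n := by omega
        have hne0 : p (j + 1) ≠ 0 := by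
          intro h0
          have := hinj (j + 1) hin a ha_lt (by rw [h0, ha0])
          omega
        have hgt : p j < p (j + 1) := by
          by_contra hcon; push_neg at hcon
          have hne : p (j + 1) ≠ p j := fun h => by
            have := hinj (j + 1) hin j (by omega) h; omega
          exact h321 j (j + 1) a (by omega) (by omega) ha_lt ⟨by omega, by omega⟩
        by_contra hcon2
        have hgt2 : p 0 + j + 1 < p (j + 1) := by omega
        obtain ⟨q, hq_lt, hq⟩ := hsurj (p 0 + j + 1) (by have := hlt (j + 1) hin; omega)
        have hq_gt : j + 1 < q := by
          by_contra hcon3; push_neg at hcon3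
          rcases Nat.lt_or_ge q (j + 1) with h | h
          · have := IH q (by omega) (by omega); omega
          · have hq' : q = j + 1 := by omega
            rw [hq'] at hq; omega
        exact h132 j (j + 1) q (by omega) hq_gt hq_lt ⟨by omega, by omega⟩
    -- Step 2 : the values below p 0 sit right after position a
    have step2 : ∀ t, t < p 0 → a + t < n ∧ p (a + t) = t := by
      intro t
      induction t using Nat.strong_induction_on with
      | _ t IH =>
        intro htb
        rcases Nat.eq_zero_or_pos t with rfl | htp
        · constructor
          · omega
          · simpa using ha0
        obtain ⟨s, rfl⟩ : ∃ s, t = s + 1 := ⟨t - 1, by omega⟩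
        have hs := IH s (by omega) (by omega)
        obtain ⟨q, hq_lt, hq⟩ := hsurj (s + 1) (by omega)
        have hq_ge : a + s + 1 ≤ q := by
          by_contra hc; push_neg at hc
          rcases Nat.lt_or_ge q a with h | h
          · have := step1 q h; omega
          · obtain ⟨h1, h2⟩ := IH (q - a) (by omega) (by omega)
            have hqq : a + (q - a) = q := by omega
            rw [hqq] at h2; omega
        have hq_eq : q = a + s + 1 := by
          by_contra hne
          have hgtq : a + s + 1 < q := by omega
          have hr_lt : a + s + 1 < n := by omega
          have hwne : p (a + s + 1) ≠ s + 1 := fun h => by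
            have := hinj (a + s + 1) hr_lt q hq_lt (by rw [h, hq])
            omega
          rcases Nat.lt_or_ge (s + 1) (p (a + s + 1)) with h | h
          · exact h132 (a + s) (a + s + 1) q (by omega) (by omega) hq_lt
              ⟨by omega, by omega⟩
          · obtain ⟨hW1, hW2⟩ := IH (p (a + s + 1)) (by omega) (by omega)
            have := hinj (a + s + 1) hr_lt (a + p (a + s + 1)) hW1 hW2.symm
            omega
        constructor
        · omega
        · have hqq : a + (s + 1) = q := by omega
          rw [hqq, hq]
    have hab : a + p 0 ≤ n := by
      have := (step2 (p 0 - 1) (by omega)).1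
      omega
    -- Step 3 : positions past a + p 0 carry large values
    have step3 : ∀ i, a + p 0 ≤ i → i < n → a + p 0 ≤ p i := by
      intro i hi hin
      by_contra hc; push_neg at hc
      rcases Nat.lt_or_ge (p i) (p 0) with h | h
      · obtain ⟨h1, h2⟩ := step2 (p i) h
        have := hinj i hin (a + p i) h1 h2.symm
        omega
      · have h2 := step1 (p i - p 0) (by omega)
        have := hinj i hin (p i - p 0) (by omega) (by rw [h2]; omega)
        omega
    -- Step 4 : tail is fixed
    have step4 : ∀ t, a + p 0 + t < n → p (a + p 0 + t) = a + p 0 + t := by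
      intro t
      induction t using Nat.strong_induction_on with
      | _ t IH =>
        intro htn
        obtain ⟨q, hq_lt, hq⟩ := hsurj (a + p 0 + t) htn
        have hq_ge : a + p 0 ≤ q := by
          by_contra hc; push_neg at hc
          rcases Nat.lt_or_ge q a with h | h
          · have := step1 q h; omega
          · obtain ⟨h1, h2⟩ := step2 (q - a) (by omega)
            have hqq : a + (q - a) = q := by omega
            rw [hqq] at h2; omega
        have hq_ge2 : a + p 0 + t ≤ q := by
          by_contra hc; push_neg at hc
          have h2 := IH (q - (a + p 0)) (by omega) (by omega)
          have hqq : a + p 0 + (q - (a + p 0)) = q := by omega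
          rw [hqq] at h2; omega
        by_contra hne
        have hq_gt : a + p 0 + t < q := by
          rcases eq_or_lt_of_le hq_ge2 with h | h
          · subst h; exact absurd hq hne
          · exact h
        have hw_ge : a + p 0 ≤ p (a + p 0 + t) := step3 _ (by omega) htn
        have hw_gt : a + p 0 + t < p (a + p 0 + t) := by
          by_contra hc; push_neg at hc
          have hcase : p (a + p 0 + t) - (a + p 0) < t ∨ p (a + p 0 + t) = a + p 0 + t := by
            omega
          rcases hcase with hs | hs
          · have h2 := IH (p (a + p 0 + t) - (a + p 0)) hs (by omega)
            have hqq : a + p 0 + (p (a + p 0 + t) - (a + p 0)) = p (a + p 0 + t) := by omega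
            rw [hqq] at h2
            have := hinj (a + p 0 + t) htn (p (a + p 0 + t)) (by omega) h2.symm
            omega
          · exact hne hs
        exact h132 0 (a + p 0 + t) q (by omega) hq_gt hq_lt ⟨by omega, by omega⟩
    right
    refine ⟨a, p 0, ha_pos, by omega, hab, ?_⟩
    intro i hi
    unfold rfun
    split_ifs with h1 h2
    · rw [step1 i h1]; omega
    · obtain ⟨hh1, hh2⟩ := step2 (i - a) (by omega)
      have hqq : a + (i - a) = i := by omega
      rw [hqq] at hh2; omega
    · have h3 := step4 (i - (a + p 0)) (by omega)
      have hqq : a + p 0 + (i - (a + p 0)) = i := by omega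
      rw [hqq] at h3; omega

noncomputable def dfCount {n : ℕ} (π : Equiv.Perm (Fin n)) : ℕ :=
  Nat.card {i : Fin n // π i < i}

/-- cardinality helpers -/
lemma card_fin_le (n m : ℕ) : Nat.card {i : Fin n // m ≤ (i : ℕ)} = n - m := by
  have e : {i : Fin n // m ≤ (i : ℕ)} ≃ Fin (n - m) :=
    { toFun := fun x => ⟨x.1.val - m, by have h1 := x.1.isLt; have h2 := x.2; omega⟩
      invFun := fun j => ⟨⟨j.val + m, by have := j.isLt; omega⟩, by
        show m ≤ j.val + m; omega⟩
      left_inv := fun x => Subtype.ext (Fin.ext (by have := x.2; simp; omega))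
      right_inv := fun j => Fin.ext (by simp) }
  rw [Nat.card_congr e]; simp

lemma card_fin_lt (n m : ℕ) (h : m ≤ n) : Nat.card {i : Fin n // (i : ℕ) < m} = m := by
  have e : {i : Fin n // (i : ℕ) < m} ≃ Fin m :=
    { toFun := fun x => ⟨x.1.val, x.2⟩
      invFun := fun j => ⟨⟨j.val, by have := j.isLt; omega⟩, by have := j.isLt; exact this⟩
      left_inv := fun x => Subtype.ext (Fin.ext rfl)
      right_inv := fun j => Fin.ext rfl }
  rw [Nat.card_congr e]; simp

lemma card_fin_mid (n a b : ℕ) (h : a + b ≤ n) :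
    Nat.card {i : Fin n // a ≤ (i : ℕ) ∧ (i : ℕ) < a + b} = b := by
  have e : {i : Fin n // a ≤ (i : ℕ) ∧ (i : ℕ) < a + b} ≃ Fin b :=
    { toFun := fun x => ⟨x.1.val - a, by have := x.2; omega⟩
      invFun := fun j => ⟨⟨j.val + a, by have := j.isLt; omega⟩, by
        constructor
        · show a ≤ j.val + a; omega
        · show j.val + a < a + b; have := j.isLt; omega⟩
      left_inv := fun x => Subtype.ext (Fin.ext (by have := x.2; simp; omega))
      right_inv := fun j => Fin.ext (by simp) }
  rw [Nat.card_congr e]; simp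

/-- statistics of the rotation permutation -/
lemma fp_rperm {n a b : ℕ} (h : a + b ≤ n) (ha : 0 < a) (hb : 0 < b) :
    fpCount (rperm n a b h) = n - (a + b) := by
  have hiff : ∀ i : Fin n, (rperm n a b h i = i) ↔ (a + b ≤ (i : ℕ)) := by
    intro i
    rw [Fin.ext_iff, rperm_apply]
    unfold rfun; split_ifs <;> omega
  exact (Nat.card_congr (Equiv.subtypeEquivRight hiff)).trans (card_fin_le n (a + b))

lemma exc_rperm {n a b : ℕ} (h : a + b ≤ n) (hb : 0 < b) :
    excCount (rperm n a b h) = a := by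
  have hiff : ∀ i : Fin n, (i < rperm n a b h i) ↔ ((i : ℕ) < a) := by
    intro i
    rw [Fin.lt_def, rperm_apply]
    unfold rfun; split_ifs <;> omega
  exact (Nat.card_congr (Equiv.subtypeEquivRight hiff)).trans (card_fin_lt n a (by omega))

lemma df_rperm {n a b : ℕ} (h : a + b ≤ n) (ha : 0 < a) :
    dfCount (rperm n a b h) = b := by
  have hiff : ∀ i : Fin n, (rperm n a b h i < i) ↔ (a ≤ (i : ℕ) ∧ (i : ℕ) < a + b) := by
    intro i
    rw [Fin.lt_def, rperm_apply]
    unfold rfun; split_ifs <;> omega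
  exact (Nat.card_congr (Equiv.subtypeEquivRight hiff)).trans (card_fin_mid n a b h)

/-- statistics of the identity -/
lemma fp_one {n : ℕ} : fpCount (1 : Equiv.Perm (Fin n)) = n := by
  have hiff : ∀ i : Fin n, ((1 : Equiv.Perm (Fin n)) i = i) ↔ ((0 : ℕ) ≤ (i : ℕ)) := by
    simp
  unfold fpCount
  rw [Nat.card_congr (Equiv.subtypeEquivRight hiff), card_fin_le n 0]; omega

lemma exc_one {n : ℕ} : excCount (1 : Equiv.Perm (Fin n)) = 0 := by
  have : IsEmpty {i : Fin n // i < (1 : Equiv.Perm (Fin n)) i} :=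
    ⟨fun x => by have := x.2; simp at this⟩
  exact Nat.card_of_isEmpty

lemma df_one {n : ℕ} : dfCount (1 : Equiv.Perm (Fin n)) = 0 := by
  have : IsEmpty {i : Fin n // (1 : Equiv.Perm (Fin n)) i < i} :=
    ⟨fun x => by have := x.2; simp at this⟩
  exact Nat.card_of_isEmpty

/-- no excedances implies identity -/
lemma exc_zero {n : ℕ} {π : Equiv.Perm (Fin n)} (h : excCount π = 0) : π = 1 := by
  have he : IsEmpty {i : Fin n // i < π i} := by
    rcases Nat.card_eq_zero.mp h with h' | h'
    · exact h'
    · exact absurd h' (not_infinite_iff_finite.mpr inferInstance)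
  have hle : ∀ i : Fin n, (π i : ℕ) ≤ (i : ℕ) := by
    intro i
    by_contra hc
    exact he.false ⟨i, by rw [Fin.lt_def]; omega⟩
  have hsum : ∑ i : Fin n, ((π i : ℕ)) = ∑ i : Fin n, (i : ℕ) :=
    Equiv.sum_comp π (fun i : Fin n => (i : ℕ))
  have := (Finset.sum_eq_sum_iff_of_le (fun i _ => hle i)).mp hsum
  ext i
  have := this i (Finset.mem_univ i)
  simpa using this

lemma df_zero {n : ℕ} {π : Equiv.Perm (Fin n)} (h : dfCount π = 0) : π = 1 := by
  have he : IsEmpty {i : Fin n // π i < i} := by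
    rcases Nat.card_eq_zero.mp h with h' | h'
    · exact h'
    · exact absurd h' (not_infinite_iff_finite.mpr inferInstance)
  have hle : ∀ i : Fin n, (i : ℕ) ≤ (π i : ℕ) := by
    intro i
    by_contra hc
    exact he.false ⟨i, by rw [Fin.lt_def]; omega⟩
  have hsum : ∑ i : Fin n, ((π i : ℕ)) = ∑ i : Fin n, (i : ℕ) :=
    Equiv.sum_comp π (fun i : Fin n => (i : ℕ))
  have := (Finset.sum_eq_sum_iff_of_le (fun i _ => hle i)).mp hsum.symm
  ext i
  have := this i (Finset.mem_univ i)
  simpa using this.symm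

/-- conjugation by reversal -/
lemma fp_conj {n : ℕ} (π : Equiv.Perm (Fin n)) :
    fpCount (Fin.revPerm * π * Fin.revPerm) = fpCount π := by
  apply Nat.card_congr
  apply Equiv.subtypeEquiv Fin.revPerm
  intro i
  simp only [Equiv.Perm.mul_apply, Fin.revPerm_apply]
  constructor
  · intro h
    have := congrArg Fin.rev h
    simpa [Fin.rev_rev] using this
  · intro h
    rw [h, Fin.rev_rev]

lemma lt_rev_iff {n : ℕ} (u v : Fin n) : u < Fin.rev v ↔ v < Fin.rev u := by
  conv_lhs => rw [← Fin.rev_rev u]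
  rw [Fin.rev_lt_rev]

lemma rev_lt_iff {n : ℕ} (u v : Fin n) : Fin.rev u < v ↔ Fin.rev v < u := by
  conv_lhs => rw [← Fin.rev_rev v]
  rw [Fin.rev_lt_rev]

lemma exc_conj {n : ℕ} (π : Equiv.Perm (Fin n)) :
    excCount (Fin.revPerm * π * Fin.revPerm) = dfCount π := by
  apply Nat.card_congr
  apply Equiv.subtypeEquiv Fin.revPerm
  intro i
  simp only [Equiv.Perm.mul_apply, Fin.revPerm_apply]
  rw [lt_rev_iff]

lemma df_conj {n : ℕ} (π : Equiv.Perm (Fin n)) :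
    dfCount (Fin.revPerm * π * Fin.revPerm) = excCount π := by
  apply Nat.card_congr
  apply Equiv.subtypeEquiv Fin.revPerm
  intro i
  simp only [Equiv.Perm.mul_apply, Fin.revPerm_apply]
  rw [rev_lt_iff]

section Part4
variable {n : ℕ}

lemma perm_classify (π : Equiv.Perm (Fin n))
    (h132 : PermAvoids π p132) (h321 : PermAvoids π p321) :
    π = 1 ∨ ∃ a b, ∃ (_ : 0 < a) (_ : 0 < b) (h : a + b ≤ n), π = rperm n a b h := by
  set p : ℕ → ℕ := fun i => if h : i < n then (π ⟨i, h⟩ : ℕ) else i with hp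
  have hpv : ∀ (i : ℕ) (h : i < n), p i = (π ⟨i, h⟩ : ℕ) := fun i h => dif_pos h
  have hlt : ∀ i, i < n → p i < n := fun i h => by rw [hpv i h]; exact (π ⟨i, h⟩).isLt
  have hinj : ∀ i, i < n → ∀ j, j < n → p i = p j → i = j := by
    intro i hi j hj hij
    rw [hpv i hi, hpv j hj] at hij
    have := π.injective (Fin.ext hij)
    simpa using congrArg Fin.val this
  have hsurj : ∀ v, v < n → ∃ i, i < n ∧ p i = v := by
    intro v hv
    refine ⟨(π.symm ⟨v, hv⟩ : ℕ), (π.symm ⟨v, hv⟩).isLt, ?_⟩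
    rw [hpv _ (π.symm ⟨v, hv⟩).isLt]
    simp
  have H132 : ∀ i j k, i < j → j < k → k < n → ¬(p i < p k ∧ p k < p j) := by
    rintro i j k hij hjk hk ⟨h1, h2⟩
    apply h132
    rw [contains_132_iff]
    rw [hpv i (by omega), hpv k hk] at h1
    rw [hpv k hk, hpv j (by omega)] at h2
    exact ⟨⟨i, by omega⟩, ⟨j, by omega⟩, ⟨k, hk⟩, by simpa using hij,
      by simpa using hjk, by rw [Fin.lt_def]; exact h1, by rw [Fin.lt_def]; exact h2⟩
  have H321 : ∀ i j k, i < j → j < k → k < n → ¬(p k < p j ∧ p j < p i) := by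
    rintro i j k hij hjk hk ⟨h1, h2⟩
    apply h321
    rw [contains_321_iff]
    rw [hpv k hk, hpv j (by omega)] at h1
    rw [hpv j (by omega), hpv i (by omega)] at h2
    exact ⟨⟨i, by omega⟩, ⟨j, by omega⟩, ⟨k, hk⟩, by simpa using hij,
      by simpa using hjk, by rw [Fin.lt_def]; exact h1, by rw [Fin.lt_def]; exact h2⟩
  rcases core n p hlt hinj hsurj H132 H321 with h | ⟨a, b, ha, hb, hle, hfor⟩
  · left
    ext i
    rw [Equiv.Perm.one_apply]
    have := h i i.isLt
    rw [hpv i i.isLt] at this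
    simpa [Fin.ext_iff] using this
  · right
    refine ⟨a, b, ha, hb, hle, ?_⟩
    ext i
    have := hfor i i.isLt
    rw [hpv i i.isLt] at this
    rw [rperm_apply]
    simpa using this

lemma rperm_avoids_132 {a b : ℕ} (h : a + b ≤ n) : PermAvoids (rperm n a b h) p132 := by
  rw [PermAvoids, contains_132_iff]
  rintro ⟨i, j, k, hij, hjk, h1, h2⟩
  rw [Fin.lt_def] at hij hjk
  rw [Fin.lt_def, rperm_apply, rperm_apply] at h1 h2
  unfold rfun at h1 h2
  split_ifs at h1 h2 <;> omega

lemma rperm_avoids_321 {a b : ℕ} (h : a + b ≤ n) : PermAvoids (rperm n a b h) p321 := by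
  rw [PermAvoids, contains_321_iff]
  rintro ⟨i, j, k, hij, hjk, h1, h2⟩
  rw [Fin.lt_def] at hij hjk
  rw [Fin.lt_def, rperm_apply, rperm_apply] at h1 h2
  unfold rfun at h1 h2
  split_ifs at h1 h2 <;> omega

lemma one_avoids_132 : PermAvoids (1 : Equiv.Perm (Fin n)) p132 := by
  rw [PermAvoids, contains_132_iff]
  rintro ⟨i, j, k, hij, hjk, h1, h2⟩
  simp only [Equiv.Perm.one_apply] at h1 h2
  exact lt_asymm hjk h2

lemma one_avoids_321 : PermAvoids (1 : Equiv.Perm (Fin n)) p321 := by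
  rw [PermAvoids, contains_321_iff]
  rintro ⟨i, j, k, hij, hjk, h1, h2⟩
  simp only [Equiv.Perm.one_apply] at h1 h2
  exact lt_asymm hjk h1

lemma contains_conj_mp (π : Equiv.Perm (Fin n)) (σ : Equiv.Perm (Fin 3))
    (h : PermContains π σ) :
    PermContains (Fin.revPerm * π * Fin.revPerm) (Fin.revPerm * σ * Fin.revPerm) := by
  obtain ⟨f, hmono, hiff⟩ := h
  refine ⟨fun i => Fin.rev (f (Fin.rev i)), ?_, ?_⟩
  · intro i j hij
    exact Fin.rev_lt_rev.mpr (hmono _ _ (Fin.rev_lt_rev.mpr hij))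
  · intro i j
    simp only [Equiv.Perm.mul_apply, Fin.revPerm_apply, Fin.rev_rev]
    rw [Fin.rev_lt_rev, Fin.rev_lt_rev]
    exact hiff (Fin.rev j) (Fin.rev i)

lemma conj_conj (π : Equiv.Perm (Fin n)) :
    Fin.revPerm * (Fin.revPerm * π * Fin.revPerm) * Fin.revPerm = π := by
  ext x
  simp [Equiv.Perm.mul_apply, Fin.rev_rev]

lemma contains_conj_iff (π : Equiv.Perm (Fin n)) (σ : Equiv.Perm (Fin 3)) :
    PermContains (Fin.revPerm * π * Fin.revPerm) (Fin.revPerm * σ * Fin.revPerm) ↔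
      PermContains π σ := by
  constructor
  · intro h
    have := contains_conj_mp _ _ h
    rwa [conj_conj, conj_conj] at this
  · exact contains_conj_mp π σ

lemma rev_p132 : Fin.revPerm * p132 * Fin.revPerm = p213 := by decide
lemma rev_p213 : Fin.revPerm * p213 * Fin.revPerm = p132 := by decide
lemma rev_p321 : Fin.revPerm * p321 * Fin.revPerm = p321 := by decide

lemma card_eq_one_of {α : Type*} {P : α → Prop} (c : α) (h : ∀ x, P x ↔ x = c) :
    Nat.card {x // P x} = 1 := by
  have e : {x // P x} ≃ Unit :=
    { toFun := fun _ => Unit.unit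
      invFun := fun _ => ⟨c, (h c).mpr rfl⟩
      left_inv := fun x => by
        rcases x with ⟨x, hx⟩
        have := (h x).mp hx
        subst this
        rfl
      right_inv := fun u => rfl }
  rw [Nat.card_congr e]
  simp

lemma card_eq_zero_of {α : Type*} {P : α → Prop} (h : ∀ x, ¬ P x) :
    Nat.card {x // P x} = 0 := by
  have : IsEmpty {x // P x} := ⟨fun x => h x x.2⟩
  exact Nat.card_of_isEmpty

def targetCount (i j n : ℕ) : ℕ :=
  (if i = n ∧ j = 0 then 1 else 0) + (if 1 ≤ j ∧ i + j < n then 1 else 0)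

theorem count_fam1 (n i j : ℕ) :
    Nat.card {π : Equiv.Perm (Fin n) //
      (PermAvoids π p132 ∧ PermAvoids π p321) ∧ fpCount π = i ∧ excCount π = j} =
    targetCount i j n := by
  unfold targetCount
  by_cases hj : j = 0
  · subst hj
    by_cases hi : i = n
    · have hcard : Nat.card {π : Equiv.Perm (Fin n) //
          (PermAvoids π p132 ∧ PermAvoids π p321) ∧ fpCount π = i ∧ excCount π = 0} = 1 := by
        apply card_eq_one_of (1 : Equiv.Perm (Fin n))
        intro π
        constructor
        · rintro ⟨_, _, hexc⟩; exact exc_zero hexc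
        · rintro rfl
          exact ⟨⟨one_avoids_132, one_avoids_321⟩, by rw [fp_one, hi], exc_one⟩
      rw [hcard, if_pos ⟨hi, rfl⟩, if_neg (by omega)]
    · have hcard : Nat.card {π : Equiv.Perm (Fin n) //
          (PermAvoids π p132 ∧ PermAvoids π p321) ∧ fpCount π = i ∧ excCount π = 0} = 0 := by
        apply card_eq_zero_of
        rintro π ⟨_, hfp, hexc⟩
        have := exc_zero hexc
        subst this
        rw [fp_one] at hfp
        exact hi hfp.symm
      rw [hcard, if_neg (by tauto), if_neg (by omega)]
  · by_cases hij : i + j < n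
    · have hcard : Nat.card {π : Equiv.Perm (Fin n) //
          (PermAvoids π p132 ∧ PermAvoids π p321) ∧ fpCount π = i ∧ excCount π = j} = 1 := by
        apply card_eq_one_of (rperm n j (n - i - j) (by omega))
        intro π
        constructor
        · rintro ⟨⟨h1, h2⟩, hfp, hexc⟩
          rcases perm_classify π h1 h2 with rfl | ⟨a, b, ha, hb, hle, rfl⟩
          · rw [exc_one] at hexc; omega
          · rw [fp_rperm hle ha hb] at hfp
            rw [exc_rperm hle hb] at hexc
            subst hexc
            have hB : b = n - i - a := by omega
            subst hB
            rfl
        · rintro rfl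
          refine ⟨⟨rperm_avoids_132 _, rperm_avoids_321 _⟩, ?_, ?_⟩
          · rw [fp_rperm _ (by omega) (by omega)]; omega
          · rw [exc_rperm _ (by omega)]
      rw [hcard, if_neg (by omega), if_pos ⟨by omega, hij⟩]
    · have hcard : Nat.card {π : Equiv.Perm (Fin n) //
          (PermAvoids π p132 ∧ PermAvoids π p321) ∧ fpCount π = i ∧ excCount π = j} = 0 := by
        apply card_eq_zero_of
        rintro π ⟨⟨h1, h2⟩, hfp, hexc⟩
        rcases perm_classify π h1 h2 with rfl | ⟨a, b, ha, hb, hle, rfl⟩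
        · rw [exc_one] at hexc; omega
        · rw [fp_rperm hle ha hb] at hfp
          rw [exc_rperm hle hb] at hexc
          omega
      rw [hcard, if_neg (by omega), if_neg (by omega)]

theorem count_fam1' (n i j : ℕ) :
    Nat.card {π : Equiv.Perm (Fin n) //
      (PermAvoids π p132 ∧ PermAvoids π p321) ∧ fpCount π = i ∧ dfCount π = j} =
    targetCount i j n := by
  unfold targetCount
  by_cases hj : j = 0
  · subst hj
    by_cases hi : i = n
    · have hcard : Nat.card {π : Equiv.Perm (Fin n) //
          (PermAvoids π p132 ∧ PermAvoids π p321) ∧ fpCount π = i ∧ dfCount π = 0} = 1 := by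
        apply card_eq_one_of (1 : Equiv.Perm (Fin n))
        intro π
        constructor
        · rintro ⟨_, _, hdf⟩; exact df_zero hdf
        · rintro rfl
          exact ⟨⟨one_avoids_132, one_avoids_321⟩, by rw [fp_one, hi], df_one⟩
      rw [hcard, if_pos ⟨hi, rfl⟩, if_neg (by omega)]
    · have hcard : Nat.card {π : Equiv.Perm (Fin n) //
          (PermAvoids π p132 ∧ PermAvoids π p321) ∧ fpCount π = i ∧ dfCount π = 0} = 0 := by
        apply card_eq_zero_of
        rintro π ⟨_, hfp, hdf⟩
        have := df_zero hdf
        subst this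
        rw [fp_one] at hfp
        exact hi hfp.symm
      rw [hcard, if_neg (by tauto), if_neg (by omega)]
  · by_cases hij : i + j < n
    · have hcard : Nat.card {π : Equiv.Perm (Fin n) //
          (PermAvoids π p132 ∧ PermAvoids π p321) ∧ fpCount π = i ∧ dfCount π = j} = 1 := by
        apply card_eq_one_of (rperm n (n - i - j) j (by omega))
        intro π
        constructor
        · rintro ⟨⟨h1, h2⟩, hfp, hdf⟩
          rcases perm_classify π h1 h2 with rfl | ⟨a, b, ha, hb, hle, rfl⟩
          · rw [df_one] at hdf; omega
          · rw [fp_rperm hle ha hb] at hfp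
            rw [df_rperm hle ha] at hdf
            subst hdf
            have hA : a = n - i - b := by omega
            subst hA
            rfl
        · rintro rfl
          refine ⟨⟨rperm_avoids_132 _, rperm_avoids_321 _⟩, ?_, ?_⟩
          · rw [fp_rperm _ (by omega) (by omega)]; omega
          · rw [df_rperm _ (by omega)]
      rw [hcard, if_neg (by omega), if_pos ⟨by omega, hij⟩]
    · have hcard : Nat.card {π : Equiv.Perm (Fin n) //
          (PermAvoids π p132 ∧ PermAvoids π p321) ∧ fpCount π = i ∧ dfCount π = j} = 0 := by
        apply card_eq_zero_of
        rintro π ⟨⟨h1, h2⟩, hfp, hdf⟩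
        rcases perm_classify π h1 h2 with rfl | ⟨a, b, ha, hb, hle, rfl⟩
        · rw [df_one] at hdf; omega
        · rw [fp_rperm hle ha hb] at hfp
          rw [df_rperm hle ha] at hdf
          omega
      rw [hcard, if_neg (by omega), if_neg (by omega)]

theorem count_fam2 (n i j : ℕ) :
    Nat.card {π : Equiv.Perm (Fin n) //
      (PermAvoids π p213 ∧ PermAvoids π p321) ∧ fpCount π = i ∧ excCount π = j} =
    targetCount i j n := by
  rw [← count_fam1' n i j]
  apply Nat.card_congr
  refine
    { toFun := fun x => ⟨Fin.revPerm * x.1 * Fin.revPerm, ?_⟩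
      invFun := fun x => ⟨Fin.revPerm * x.1 * Fin.revPerm, ?_⟩
      left_inv := fun x => Subtype.ext (conj_conj x.1)
      right_inv := fun x => Subtype.ext (conj_conj x.1) }
  · obtain ⟨π, ⟨h213, h321⟩, hfp, hexc⟩ := x
    refine ⟨⟨?_, ?_⟩, ?_, ?_⟩
    · intro hc
      rw [← rev_p213] at hc
      exact h213 ((contains_conj_iff π p213).mp hc)
    · intro hc
      exact h321 ((contains_conj_iff π p321).mp (by rw [rev_p321]; exact hc))
    · rw [fp_conj]; exact hfp
    · rw [df_conj]; exact hexc
  · obtain ⟨π, ⟨h132, h321⟩, hfp, hdf⟩ := x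
    refine ⟨⟨?_, ?_⟩, ?_, ?_⟩
    · intro hc
      rw [← rev_p132] at hc
      exact h132 ((contains_conj_iff π p132).mp hc)
    · intro hc
      exact h321 ((contains_conj_iff π p321).mp (by rw [rev_p321]; exact hc))
    · rw [fp_conj]; exact hfp
    · rw [exc_conj]; exact hdf

end Part4

section Part5
open MvPowerSeries Finsupp

noncomputable def GA : MvPowerSeries (Fin 3) ℤ :=
  fun d => if d 0 = d 2 ∧ d 1 = 0 then 1 else 0
noncomputable def GC : MvPowerSeries (Fin 3) ℤ :=
  fun d => if d 0 + d 1 ≤ d 2 then 1 else 0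
noncomputable def GC1 : MvPowerSeries (Fin 3) ℤ :=
  fun d => if d 1 = 0 ∧ d 0 ≤ d 2 then 1 else 0
noncomputable def GC0 : MvPowerSeries (Fin 3) ℤ :=
  fun d => if d 0 = 0 ∧ d 1 = 0 then 1 else 0
noncomputable def GG : MvPowerSeries (Fin 3) ℤ :=
  fun d => ((targetCount (d 0) (d 1) (d 2) : ℕ) : ℤ)

lemma hX3 (s : Fin 3) : (X s : MvPowerSeries (Fin 3) ℤ) = monomial (single s 1) 1 := by
  rw [← pow_one (X s : MvPowerSeries (Fin 3) ℤ), X_pow_eq]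

lemma hxz : vx * vz = monomial (single 0 1 + single 2 1) 1 := by
  rw [vx, vz, hX3, hX3, monomial_mul_monomial, one_mul]

lemma hqz : vq * vz = monomial (single 1 1 + single 2 1) 1 := by
  rw [vq, vz, hX3, hX3, monomial_mul_monomial, one_mul]

lemma hz : vz = monomial (single 2 1) 1 := by rw [vz, hX3]

lemma hqz2 : vq * vz ^ 2 = monomial (single 1 1 + single 2 2) 1 := by
  rw [vq, vz, hX3, X_pow_eq, monomial_mul_monomial, one_mul]

lemma expand (e : Fin 3 →₀ ℕ) (f : MvPowerSeries (Fin 3) ℤ) (d : Fin 3 →₀ ℕ) :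
    coeff d ((1 - monomial e 1) * f) =
      coeff d f - (if e ≤ d then coeff (d - e) f else 0) := by
  rw [sub_mul, one_mul, map_sub, coeff_monomial_mul]
  simp only [one_mul]

lemma le3 (e d : Fin 3 →₀ ℕ) : e ≤ d ↔ e 0 ≤ d 0 ∧ e 1 ≤ d 1 ∧ e 2 ≤ d 2 := by
  rw [Finsupp.le_def]
  constructor
  · intro h; exact ⟨h 0, h 1, h 2⟩
  · rintro ⟨h0, h1, h2⟩ i; fin_cases i <;> assumption

lemma eq0_3 (d : Fin 3 →₀ ℕ) : d = 0 ↔ d 0 = 0 ∧ d 1 = 0 ∧ d 2 = 0 := by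
  constructor
  · rintro rfl; simp
  · rintro ⟨h0, h1, h2⟩; ext i; fin_cases i <;> simp_all

lemma hA : (1 - vx * vz) * GA = 1 := by
  apply MvPowerSeries.ext; intro d
  rw [hxz, expand, MvPowerSeries.coeff_one]
  simp only [MvPowerSeries.coeff_apply, GA, le3, eq0_3, Finsupp.tsub_apply,
    Finsupp.add_apply, Finsupp.single_apply]
  norm_num
  split_ifs <;> omega

lemma hC1 : (1 - vq * vz) * GC = GC1 := by
  apply MvPowerSeries.ext; intro d
  rw [hqz, expand]
  simp only [MvPowerSeries.coeff_apply, GC, GC1, le3, Finsupp.tsub_apply,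
    Finsupp.add_apply, Finsupp.single_apply]
  norm_num
  split_ifs <;> omega

lemma hC2 : (1 - vx * vz) * GC1 = GC0 := by
  apply MvPowerSeries.ext; intro d
  rw [hxz, expand]
  simp only [MvPowerSeries.coeff_apply, GC1, GC0, le3, Finsupp.tsub_apply,
    Finsupp.add_apply, Finsupp.single_apply]
  norm_num
  split_ifs <;> omega

lemma hC3 : (1 - vz) * GC0 = 1 := by
  apply MvPowerSeries.ext; intro d
  rw [hz, expand, MvPowerSeries.coeff_one]
  simp only [MvPowerSeries.coeff_apply, GC0, le3, eq0_3, Finsupp.tsub_apply,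
    Finsupp.single_apply]
  norm_num
  split_ifs <;> omega

lemma hG : GG = GA + (vq * vz ^ 2) * GC := by
  apply MvPowerSeries.ext; intro d
  rw [map_add, hqz2, coeff_monomial_mul]
  simp only [MvPowerSeries.coeff_apply, GG, GA, GC, targetCount, le3, Finsupp.tsub_apply,
    Finsupp.add_apply, Finsupp.single_apply, one_mul]
  push_cast [apply_ite (fun (x : ℕ) => (x : ℤ))]
  norm_num
  split_ifs <;> omega

lemma patternGF_fam1 : patternGF {p132, p321} = GG := by
  apply MvPowerSeries.ext; intro d
  rw [MvPowerSeries.coeff_apply, MvPowerSeries.coeff_apply]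
  show ((Nat.card _ : ℕ) : ℤ) = _
  rw [GG]
  congr 1
  rw [← count_fam1 (d 2) (d 0) (d 1)]
  apply Nat.card_congr
  apply Equiv.subtypeEquivRight
  intro π
  constructor
  · rintro ⟨hav, h⟩
    exact ⟨⟨hav _ (Or.inl rfl), hav _ (Or.inr rfl)⟩, h⟩
  · rintro ⟨⟨h1, h2⟩, h⟩
    refine ⟨?_, h⟩
    intro σ hσ
    simp only [Set.mem_insert_iff, Set.mem_singleton_iff] at hσ
    rcases hσ with rfl | rfl
    · exact h1
    · exact h2

lemma patternGF_fam2 : patternGF {p213, p321} = GG := by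
  apply MvPowerSeries.ext; intro d
  rw [MvPowerSeries.coeff_apply, MvPowerSeries.coeff_apply]
  show ((Nat.card _ : ℕ) : ℤ) = _
  rw [GG]
  congr 1
  rw [← count_fam2 (d 2) (d 0) (d 1)]
  apply Nat.card_congr
  apply Equiv.subtypeEquivRight
  intro π
  constructor
  · rintro ⟨hav, h⟩
    exact ⟨⟨hav _ (Or.inl rfl), hav _ (Or.inr rfl)⟩, h⟩
  · rintro ⟨⟨h1, h2⟩, h⟩
    refine ⟨?_, h⟩
    intro σ hσ
    simp only [Set.mem_insert_iff, Set.mem_singleton_iff] at hσ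
    rcases hσ with rfl | rfl
    · exact h1
    · exact h2


end Part5

/-- F_{{132,321}} = F_{{213,321}}, and
(1−z)(1−xz)(1−qz)·F_{{132,321}} = 1 − (1+q)z + 2qz². -/
theorem F132_321_identity :
    patternGF {p132, p321} = patternGF {p213, p321} ∧
    (1 - vz) * (1 - vx * vz) * (1 - vq * vz) * patternGF {p132, p321} =
      1 - (1 + vq) * vz + 2 * vq * vz ^ 2 := by
  constructor
  · rw [patternGF_fam1, patternGF_fam2]
  · rw [patternGF_fam1]
    linear_combination ((1 - vz) * (1 - vx * vz) * (1 - vq * vz)) * hG +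
      ((1 - vz) * (1 - vq * vz)) * hA +
      ((vq * vz ^ 2) * (1 - vz) * (1 - vx * vz)) * hC1 +
      ((vq * vz ^ 2) * (1 - vz)) * hC2 + (vq * vz ^ 2) * hC3
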